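/- Let p ≥ 2 and 1 ≤ k ≤ m ≤ n be integers. The number of p-ary labeled trees T on [n] whose maximal decreasing subtree MD(T) has k vertices and for which the subtree Y of T consisting of MD(T) together with all its increasing leaves has exactly m vertices equals binom(n, m) · y(m,k) · f(n−k, m−k) / binom(n−k, m−k). -/

import Mathlib

open scoped Classical

/-- A `p`-ary labeled forest: a finite set of vertices (labels, which are
natural numbers), where each non-root vertex has a parent together with a
slot position in `Fin p` (the `p` ordered, possibly empty, child positions),
each (parent, slot) pair is occupied by at most one child, and every vertex
reaches a root (a vertex with no parent) by iterating the parent map. -/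
structure PForest (p : ℕ) where
  verts : Finset ℕ
  par : ℕ → Option (ℕ × Fin p)
  par_eq_none_of_not_mem : ∀ v, v ∉ verts → par v = none
  par_mem : ∀ v ∈ verts, ∀ w s, par v = some (w, s) → w ∈ verts
  par_inj : ∀ u ∈ verts, ∀ v ∈ verts, ∀ w s,
      par u = some (w, s) → par v = some (w, s) → u = v
  reaches_root : ∀ v ∈ verts,
      ∃ k, par ((fun x => ((par x).map Prod.fst).getD x)^[k] v) = none

namespace PForest

variable {p : ℕ}

/-- One step from a vertex towards the root (identity on roots and
non-vertices). -/
def step (T : PForest p) (v : ℕ) : ℕ := ((T.par v).map Prod.fst).getD v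

/-- The roots of the forest: vertices with no parent. -/
def roots (T : PForest p) : Finset ℕ := T.verts.filter (fun v => T.par v = none)

/-- `v` belongs to the maximal decreasing subtree `MD(T)`: every edge on the
path from `v` up to its root goes from a smaller label (child) to a larger
label (parent). -/
def InMD (T : PForest p) (v : ℕ) : Prop :=
  v ∈ T.verts ∧ ∀ k w s, T.par (T.step^[k] v) = some (w, s) → T.step^[k] v < w

/-- The vertex set of the maximal decreasing subtree `MD(T)`. -/
noncomputable def mdSet (T : PForest p) : Finset ℕ :=
  T.verts.filter (fun v => T.InMD v)

/-- `T` is a `p`-ary labeled tree on `[n] = {1, …, n}`: its vertex set is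
`{1, …, n}` and it has exactly one root (and no root when `n = 0`, i.e. the
empty tree). -/
def IsTreeOn (T : PForest p) (n : ℕ) : Prop :=
  T.verts = Finset.Icc 1 n ∧ T.roots.card = min n 1

/-- `v` is a leaf of `T`: it has no children. -/
def IsLeaf (T : PForest p) (v : ℕ) : Prop := ∀ u s, T.par u ≠ some (v, s)

end PForest

/-- `t(n,k)`: the number of `p`-ary labeled trees on `[n]` whose maximal
decreasing subtree has exactly `k` vertices. -/
noncomputable def t (p n k : ℕ) : ℕ :=
  Nat.card {T : PForest p // T.IsTreeOn n ∧ T.mdSet.card = k}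

/-- `y(n,k)`: the number of `p`-ary labeled trees on `[n]` whose maximal
decreasing subtree has exactly `k` vertices and all of whose remaining
`n - k` vertices are (increasing) leaves; equivalently, trees obtained by
attaching `n - k` increasing leaves to a decreasing tree with `k` vertices. -/
noncomputable def y (p n k : ℕ) : ℕ :=
  Nat.card {T : PForest p // T.IsTreeOn n ∧ T.mdSet.card = k ∧
    ∀ v ∈ T.verts, ¬ T.InMD v → T.IsLeaf v}

/-- `f(n,k)`: the number of (unordered) forests on `[n]` consisting of `k`
`p`-ary labeled trees. -/
noncomputable def f (p n k : ℕ) : ℕ :=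
  Nat.card {T : PForest p // T.verts = Finset.Icc 1 n ∧ T.roots.card = k}


section Aux
namespace PForest

variable {p : ℕ}

theorem ext' {T U : PForest p} (hv : T.verts = U.verts) (hp : T.par = U.par) : T = U := by
  cases T; cases U; simp_all

theorem step_eq_of_par {T : PForest p} {v w : ℕ} {s : Fin p}
    (h : T.par v = some (w, s)) : T.step v = w := by simp [step, h]

theorem step_eq_of_none {T : PForest p} {v : ℕ} (h : T.par v = none) : T.step v = v := by
  simp [step, h]

theorem step_mem {T : PForest p} {v : ℕ} (hv : v ∈ T.verts) : T.step v ∈ T.verts := by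
  rcases h : T.par v with _ | ⟨w, s⟩
  · rw [step_eq_of_none h]; exact hv
  · rw [step_eq_of_par h]; exact T.par_mem v hv w s h

theorem iterate_step_mem {T : PForest p} {v : ℕ} (hv : v ∈ T.verts) (j : ℕ) :
    T.step^[j] v ∈ T.verts := by
  induction j with
  | zero => exact hv
  | succ j ih => rw [Function.iterate_succ_apply']; exact step_mem ih

/-- `reaches_root` rewritten with `step`. -/
theorem reaches_root' (T : PForest p) {v : ℕ} (hv : v ∈ T.verts) :
    ∃ j, T.par (T.step^[j] v) = none := by
  have := T.reaches_root v hv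
  exact this

theorem InMD.mem {T : PForest p} {v : ℕ} (h : T.InMD v) : v ∈ T.verts := h.1

theorem mem_mdSet {T : PForest p} {v : ℕ} : v ∈ T.mdSet ↔ T.InMD v := by
  simp only [mdSet, Finset.mem_filter]
  exact ⟨fun h => h.2, fun h => ⟨h.1, h⟩⟩

theorem mdSet_subset {T : PForest p} : T.mdSet ⊆ T.verts := Finset.filter_subset _ _

theorem InMD.step {T : PForest p} {v : ℕ} (h : T.InMD v) : T.InMD (T.step v) := by
  refine ⟨step_mem h.1, fun k w s hk => ?_⟩
  have := h.2 (k + 1) w s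
  rw [Function.iterate_succ_apply] at this
  exact this hk

theorem InMD.iterate {T : PForest p} {v : ℕ} (h : T.InMD v) (j : ℕ) :
    T.InMD (T.step^[j] v) := by
  induction j with
  | zero => exact h
  | succ j ih => rw [Function.iterate_succ_apply']; exact ih.step

theorem InMD.par {T : PForest p} {v w : ℕ} {s : Fin p} (h : T.InMD v)
    (hp : T.par v = some (w, s)) : T.InMD w := by
  have := h.step
  rwa [step_eq_of_par hp] at this

theorem iterate_step_of_none {T : PForest p} {v : ℕ} (h : T.par v = none) (k : ℕ) :
    T.step^[k] v = v := by
  induction k with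
  | zero => rfl
  | succ k ih => rw [Function.iterate_succ_apply, step_eq_of_none h, ih]

theorem root_inMD {T : PForest p} {v : ℕ} (hv : v ∈ T.verts) (h : T.par v = none) :
    T.InMD v := by
  refine ⟨hv, fun k w s hk => ?_⟩
  rw [iterate_step_of_none h, h] at hk; cases hk

theorem roots_subset (T : PForest p) : T.roots ⊆ T.verts := Finset.filter_subset _ _

theorem mem_roots {T : PForest p} {v : ℕ} : v ∈ T.roots ↔ v ∈ T.verts ∧ T.par v = none := by
  simp [roots]

/-- A vertex of a nonempty forest : some root exists in mdSet-style paths; more precisely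
from any vertex the path reaches a root which is `InMD`-reachable when the vertex is. -/
theorem exists_root_of_inMD {T : PForest p} {v : ℕ} (h : T.InMD v) :
    ∃ r ∈ T.roots, T.InMD r := by
  obtain ⟨j, hj⟩ := T.reaches_root' h.1
  exact ⟨T.step^[j] v, mem_roots.2 ⟨iterate_step_mem h.1 j, hj⟩, h.iterate j⟩

end PForest
end Aux
section Relabel
namespace PForest

variable {p : ℕ}

/-- The parent function of a relabeled forest. -/
def relabelPar (σ : ℕ ≃ ℕ) (T : PForest p) (v : ℕ) : Option (ℕ × Fin p) :=
  (T.par (σ.symm v)).map (fun ws => (σ ws.1, ws.2))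

theorem relabelPar_apply (σ : ℕ ≃ ℕ) (T : PForest p) (v : ℕ) :
    relabelPar σ T (σ v) = (T.par v).map (fun ws => (σ ws.1, ws.2)) := by
  simp [relabelPar]

theorem relabelPar_eq_none {σ : ℕ ≃ ℕ} {T : PForest p} {v : ℕ} :
    relabelPar σ T v = none ↔ T.par (σ.symm v) = none := by
  simp [relabelPar]

theorem relabelPar_eq_some {σ : ℕ ≃ ℕ} {T : PForest p} {v w : ℕ} {s : Fin p}
    (h : relabelPar σ T v = some (w, s)) :
    T.par (σ.symm v) = some (σ.symm w, s) ∧ σ (σ.symm w) = w := by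
  rcases hp : T.par (σ.symm v) with _ | ⟨u, t⟩
  · rw [relabelPar, hp] at h; cases h
  · rw [relabelPar, hp] at h
    simp only [Option.map_some, Option.some.injEq, Prod.mk.injEq] at h
    obtain ⟨h1, h2⟩ := h
    subst h1; subst h2
    simp [hp]

/-- Relabel a forest along a permutation of `ℕ`. -/
def relabel (σ : ℕ ≃ ℕ) (T : PForest p) : PForest p where
  verts := T.verts.image σ
  par := relabelPar σ T
  par_eq_none_of_not_mem v hv := by
    rw [relabelPar_eq_none]
    refine T.par_eq_none_of_not_mem _ (fun h => hv ?_)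
    exact Finset.mem_image.2 ⟨_, h, by simp⟩
  par_mem v hv w s h := by
    obtain ⟨h1, h2⟩ := relabelPar_eq_some h
    have hv' : σ.symm v ∈ T.verts := by
      obtain ⟨x, hx, rfl⟩ := Finset.mem_image.1 hv
      simpa using hx
    have := T.par_mem _ hv' _ _ h1
    exact Finset.mem_image.2 ⟨_, this, h2⟩
  par_inj u hu v hv w s h1 h2 := by
    obtain ⟨h1', _⟩ := relabelPar_eq_some h1
    obtain ⟨h2', _⟩ := relabelPar_eq_some h2
    have hu' : σ.symm u ∈ T.verts := by
      obtain ⟨x, hx, rfl⟩ := Finset.mem_image.1 hu; simpa using hx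
    have hv' : σ.symm v ∈ T.verts := by
      obtain ⟨x, hx, rfl⟩ := Finset.mem_image.1 hv; simpa using hx
    have := T.par_inj _ hu' _ hv' _ _ h1' h2'
    calc u = σ (σ.symm u) := by simp
      _ = σ (σ.symm v) := by rw [this]
      _ = v := by simp
  reaches_root v hv := by
    have hstep : ∀ y, ((relabelPar σ T (σ y)).map Prod.fst).getD (σ y) = σ (T.step y) := by
      intro y
      rw [relabelPar_apply]
      rcases hp : T.par y with _ | ⟨w, s⟩ <;> simp [hp, step]
    have key : ∀ j y, (fun x => ((relabelPar σ T x).map Prod.fst).getD x)^[j] (σ y)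
        = σ (T.step^[j] y) := by
      intro j
      induction j with
      | zero => intro y; rfl
      | succ j ih =>
        intro y
        rw [Function.iterate_succ_apply, Function.iterate_succ_apply, hstep y, ih (T.step y)]
    obtain ⟨x, hx, hxv⟩ := Finset.mem_image.1 hv
    obtain ⟨j, hj⟩ := T.reaches_root' hx
    refine ⟨j, ?_⟩
    rw [← hxv, key j x, relabelPar_eq_none]
    simpa using hj

theorem relabel_verts (σ : ℕ ≃ ℕ) (T : PForest p) :
    (relabel σ T).verts = T.verts.image σ := rfl

theorem relabel_par (σ : ℕ ≃ ℕ) (T : PForest p) (v : ℕ) :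
    (relabel σ T).par v = (T.par (σ.symm v)).map (fun ws => (σ ws.1, ws.2)) := rfl

theorem relabel_par_apply (σ : ℕ ≃ ℕ) (T : PForest p) (v : ℕ) :
    (relabel σ T).par (σ v) = (T.par v).map (fun ws => (σ ws.1, ws.2)) :=
  relabelPar_apply σ T v

theorem relabel_step (σ : ℕ ≃ ℕ) (T : PForest p) (v : ℕ) :
    (relabel σ T).step (σ v) = σ (T.step v) := by
  rcases hp : T.par v with _ | ⟨w, s⟩
  · rw [step_eq_of_none (by rw [relabel_par_apply, hp]; rfl), step_eq_of_none hp]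
  · rw [step_eq_of_par (T := relabel σ T) (by rw [relabel_par_apply, hp]; rfl),
      step_eq_of_par hp]

theorem relabel_step_iterate (σ : ℕ ≃ ℕ) (T : PForest p) (v : ℕ) (j : ℕ) :
    (relabel σ T).step^[j] (σ v) = σ (T.step^[j] v) := by
  induction j generalizing v with
  | zero => rfl
  | succ j ih =>
    rw [Function.iterate_succ_apply, Function.iterate_succ_apply, relabel_step, ih]

theorem relabel_relabel_symm (σ : ℕ ≃ ℕ) (T : PForest p) :
    relabel σ.symm (relabel σ T) = T := by
  refine ext' ?_ ?_
  · rw [relabel_verts, relabel_verts, Finset.image_image]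
    simp
  · funext v
    rw [relabel_par, relabel_par]
    simp only [Equiv.symm_symm, Equiv.symm_apply_apply]
    rcases hp : T.par (σ.symm (σ v)) with _ | ⟨w, s⟩ <;>
      simp only [Equiv.symm_apply_apply] at hp <;> simp [hp]

theorem relabel_roots (σ : ℕ ≃ ℕ) (T : PForest p) :
    (relabel σ T).roots = T.roots.image σ := by
  ext v
  simp only [mem_roots, relabel_verts, Finset.mem_image, relabel_par]
  constructor
  · rintro ⟨⟨x, hx, rfl⟩, h2⟩
    refine ⟨x, ⟨hx, ?_⟩, rfl⟩
    simp only [Equiv.symm_apply_apply] at h2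
    exact Option.map_eq_none_iff.1 h2
  · rintro ⟨x, hx, rfl⟩
    exact ⟨⟨x, hx.1, rfl⟩, by simp [hx.2]⟩

theorem strictMonoOn_symm_image {σ : ℕ ≃ ℕ} {A : Finset ℕ}
    (h : StrictMonoOn σ (A : Set ℕ)) :
    StrictMonoOn σ.symm ((A.image σ : Finset ℕ) : Set ℕ) := by
  intro a ha b hb hab
  simp only [Finset.coe_image, Set.mem_image, Finset.mem_coe] at ha hb
  obtain ⟨x, hx, rfl⟩ := ha
  obtain ⟨y, hy, rfl⟩ := hb
  simp only [Equiv.symm_apply_apply]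
  rcases lt_trichotomy x y with h' | h' | h'
  · exact h'
  · subst h'; exact absurd hab (lt_irrefl _)
  · exact absurd (h (Finset.mem_coe.2 hy) (Finset.mem_coe.2 hx) h') (asymm hab)

theorem relabel_inMD_iff {σ : ℕ ≃ ℕ} {T : PForest p}
    (hmono : StrictMonoOn σ (T.verts : Set ℕ)) {v : ℕ} (hv : v ∈ T.verts) :
    (relabel σ T).InMD (σ v) ↔ T.InMD v := by
  have hlt : ∀ a b, a ∈ T.verts → b ∈ T.verts → (σ a < σ b ↔ a < b) := by
    intro a b ha hb
    constructor
    · intro h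
      rcases lt_trichotomy a b with h' | h' | h'
      · exact h'
      · subst h'; exact absurd h (lt_irrefl _)
      · exact absurd (hmono hb ha h') (asymm h)
    · exact fun h => hmono ha hb h
  constructor
  · rintro ⟨hmem, hcond⟩
    refine ⟨hv, fun j w s hj => ?_⟩
    have := hcond j (σ w) s
    rw [relabel_step_iterate] at this
    rw [relabel_par_apply, hj] at this
    have h2 := this rfl
    have hvj : T.step^[j] v ∈ T.verts := iterate_step_mem hv j
    have hw : w ∈ T.verts := T.par_mem _ hvj w s hj
    exact (hlt _ _ hvj hw).1 h2
  · rintro ⟨hmem, hcond⟩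
    refine ⟨Finset.mem_image.2 ⟨v, hv, rfl⟩, fun j w s hj => ?_⟩
    rw [relabel_step_iterate] at hj ⊢
    rw [relabel_par_apply] at hj
    rcases hp : T.par (T.step^[j] v) with _ | ⟨u, t⟩
    · rw [hp] at hj; cases hj
    · rw [hp] at hj
      simp only [Option.map_some, Option.some.injEq, Prod.mk.injEq] at hj
      have hvj : T.step^[j] v ∈ T.verts := iterate_step_mem hv j
      have hu : u ∈ T.verts := T.par_mem _ hvj u t hp
      rw [← hj.1]
      exact (hlt _ _ hvj hu).2 (hcond j u t hp)

theorem relabel_mdSet {σ : ℕ ≃ ℕ} {T : PForest p}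
    (hmono : StrictMonoOn σ (T.verts : Set ℕ)) :
    (relabel σ T).mdSet = T.mdSet.image σ := by
  ext v
  simp only [mem_mdSet, Finset.mem_image]
  constructor
  · intro h
    have hv := h.mem
    rw [relabel_verts] at hv
    obtain ⟨x, hx, rfl⟩ := Finset.mem_image.1 hv
    exact ⟨x, (relabel_inMD_iff hmono hx).1 h, rfl⟩
  · rintro ⟨x, hx, rfl⟩
    exact (relabel_inMD_iff hmono hx.mem).2 hx

theorem relabel_isLeaf_iff (σ : ℕ ≃ ℕ) (T : PForest p) (v : ℕ) :
    (relabel σ T).IsLeaf (σ v) ↔ T.IsLeaf v := by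
  constructor
  · intro h u s hu
    exact h (σ u) s (by rw [relabel_par_apply, hu]; rfl)
  · intro h u s hu
    obtain ⟨h1, _⟩ := relabelPar_eq_some (σ := σ) (T := T) hu
    have hws : σ.symm (σ v) = v := by simp
    rw [hws] at h1
    exact h (σ.symm u) s h1

end PForest
end Relabel
section RestrictGlue
namespace PForest

variable {p : ℕ}

theorem step_iterate_congr {T U : PForest p} {C : Finset ℕ}
    (hpar : ∀ v ∈ C, T.par v = U.par v) (hcl : ∀ v ∈ C, U.step v ∈ C)
    {v : ℕ} (hv : v ∈ C) (j : ℕ) :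
    T.step^[j] v = U.step^[j] v ∧ U.step^[j] v ∈ C := by
  induction j with
  | zero => exact ⟨rfl, hv⟩
  | succ j ih =>
    obtain ⟨h1, h2⟩ := ih
    rw [Function.iterate_succ_apply', Function.iterate_succ_apply', h1]
    exact ⟨by simp only [step, hpar _ h2], hcl _ h2⟩

theorem inMD_congr {T U : PForest p} {C : Finset ℕ}
    (hpar : ∀ v ∈ C, T.par v = U.par v) (hcl : ∀ v ∈ C, U.step v ∈ C)
    {v : ℕ} (hvT : v ∈ T.verts ↔ v ∈ U.verts) (hv : v ∈ C) :
    T.InMD v ↔ U.InMD v := by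
  unfold InMD
  rw [hvT]
  refine and_congr_right (fun _ => ?_)
  constructor
  · intro h k w s hk
    obtain ⟨h1, h2⟩ := step_iterate_congr hpar hcl hv k
    have := h k w s (by rw [h1, hpar _ h2]; exact hk)
    rwa [h1] at this
  · intro h k w s hk
    obtain ⟨h1, h2⟩ := step_iterate_congr hpar hcl hv k
    rw [h1, hpar _ h2] at hk
    rw [h1]
    exact h k w s hk

/-- A generic lemma for proving `reaches_root` of modified forests. -/
theorem exists_none_iterate (q : ℕ → Option (ℕ × Fin p)) (T : PForest p)
    (hcompat : ∀ v w s, q v = some (w, s) → T.par v = some (w, s)) :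
    ∀ j v, T.par (T.step^[j] v) = none →
      ∃ i, q ((fun x => ((q x).map Prod.fst).getD x)^[i] v) = none := by
  intro j
  induction j with
  | zero =>
    intro v hv
    refine ⟨0, ?_⟩
    rw [Function.iterate_zero_apply] at hv ⊢
    rcases hq : q v with _ | ⟨w, s⟩
    · rfl
    · rw [hcompat v w s hq] at hv; cases hv
  | succ j ih =>
    intro v hv
    rcases hq : q v with _ | ⟨w, s⟩
    · exact ⟨0, hq⟩
    · have hpar := hcompat v w s hq
      rw [Function.iterate_succ_apply, step_eq_of_par hpar] at hv
      obtain ⟨i, hi⟩ := ih w hv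
      refine ⟨i + 1, ?_⟩
      rw [Function.iterate_succ_apply]
      have : ((q v).map Prod.fst).getD v = w := by simp [hq]
      rw [this]
      exact hi

/-- The parent function of the restriction of `T` to `V`. -/
def restrictPar (T : PForest p) (V : Finset ℕ) (v : ℕ) : Option (ℕ × Fin p) :=
  if v ∈ V then (T.par v).bind (fun ws => if ws.1 ∈ V then some ws else none) else none

theorem restrictPar_eq_some {T : PForest p} {V : Finset ℕ} {v w : ℕ} {s : Fin p} :
    restrictPar T V v = some (w, s) ↔ v ∈ V ∧ w ∈ V ∧ T.par v = some (w, s) := by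
  unfold restrictPar
  by_cases hv : v ∈ V
  · rcases hp : T.par v with _ | ⟨u, t⟩
    · simp [hv, hp]
    · by_cases hu : u ∈ V
      · simp only [hv, if_true, hp, Option.bind_some, hu, if_pos, true_and]
        constructor
        · intro h
          injection h with h
          injection h with h1 h2
          subst h1
          exact ⟨hu, by rw [h2]⟩
        · rintro ⟨hw, h⟩
          exact h
      · simp only [hv, if_true, hp, Option.bind_some, true_and]
        rw [if_neg hu]
        constructor
        · intro h; cases h
        · rintro ⟨hw, h⟩
          injection h with h
          injection h with h1 h2
          subst h1
          exact absurd hw hu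
  · simp [hv]

theorem restrictPar_of_mem {T : PForest p} {V : Finset ℕ} {v w : ℕ} {s : Fin p}
    (hv : v ∈ V) (hw : w ∈ V) (h : T.par v = some (w, s)) :
    restrictPar T V v = some (w, s) := restrictPar_eq_some.2 ⟨hv, hw, h⟩

theorem restrictPar_eq_none_of_par_none {T : PForest p} {V : Finset ℕ} {v : ℕ}
    (h : T.par v = none) : restrictPar T V v = none := by
  unfold restrictPar; rw [h]; simp

theorem restrictPar_eq_none_of_not_mem {T : PForest p} {V : Finset ℕ} {v : ℕ}
    (h : v ∉ V) : restrictPar T V v = none := by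
  unfold restrictPar; simp [h]

theorem restrictPar_eq_none_of_cut {T : PForest p} {V : Finset ℕ} {v w : ℕ} {s : Fin p}
    (h : T.par v = some (w, s)) (hw : w ∉ V) : restrictPar T V v = none := by
  unfold restrictPar; rw [h]; simp [hw]

/-- Restriction of a forest to a subset of vertices, cutting edges leaving
the subset. -/
def restrict (T : PForest p) (V : Finset ℕ) : PForest p where
  verts := T.verts ∩ V
  par := restrictPar T V
  par_eq_none_of_not_mem v hv := by
    rw [Finset.mem_inter] at hv
    push_neg at hv
    by_cases h : v ∈ V
    · exact restrictPar_eq_none_of_par_none (T.par_eq_none_of_not_mem v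
        (by intro hm; exact absurd h (hv hm)))
    · exact restrictPar_eq_none_of_not_mem h
  par_mem v hv w s h := by
    obtain ⟨h1, h2, h3⟩ := restrictPar_eq_some.1 h
    rw [Finset.mem_inter] at hv ⊢
    exact ⟨T.par_mem v hv.1 w s h3, h2⟩
  par_inj u hu v hv w s h1 h2 := by
    rw [Finset.mem_inter] at hu hv
    exact T.par_inj u hu.1 v hv.1 w s (restrictPar_eq_some.1 h1).2.2
      (restrictPar_eq_some.1 h2).2.2
  reaches_root v hv := by
    rw [Finset.mem_inter] at hv
    obtain ⟨j, hj⟩ := T.reaches_root' hv.1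
    exact exists_none_iterate (restrictPar T V) T
      (fun v w s h => (restrictPar_eq_some.1 h).2.2) j v hj

theorem restrict_verts (T : PForest p) (V : Finset ℕ) :
    (restrict T V).verts = T.verts ∩ V := rfl

theorem restrict_par (T : PForest p) (V : Finset ℕ) (v : ℕ) :
    (restrict T V).par v = restrictPar T V v := rfl

end PForest
end RestrictGlue
section Glue
namespace PForest

variable {p : ℕ}

theorem mem_of_par_some {T : PForest p} {v : ℕ} {ws : ℕ × Fin p}
    (h : T.par v = some ws) : v ∈ T.verts := by
  by_contra hv
  rw [T.par_eq_none_of_not_mem v hv] at h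
  cases h

/-- The parent function of the gluing of a tree `Y` on top of a forest `F`. -/
def gluePar (Y F : PForest p) (v : ℕ) : Option (ℕ × Fin p) :=
  (F.par v).elim (Y.par v) some

theorem gluePar_of_some {Y F : PForest p} {v : ℕ} {ws : ℕ × Fin p}
    (h : F.par v = some ws) : gluePar Y F v = some ws := by simp [gluePar, h]

theorem gluePar_of_none {Y F : PForest p} {v : ℕ} (h : F.par v = none) :
    gluePar Y F v = Y.par v := by simp [gluePar, h]

theorem gluePar_cases {Y F : PForest p} {v : ℕ} {ws : ℕ × Fin p}
    (h : gluePar Y F v = some ws) :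
    F.par v = some ws ∨ (F.par v = none ∧ Y.par v = some ws) := by
  rcases hf : F.par v with _ | x
  · rw [gluePar_of_none hf] at h; exact Or.inr ⟨rfl, h⟩
  · rw [gluePar_of_some hf] at h; exact Or.inl h

theorem gluePar_eq_none {Y F : PForest p} {v : ℕ} :
    gluePar Y F v = none ↔ F.par v = none ∧ Y.par v = none := by
  rcases hf : F.par v with _ | x
  · rw [gluePar_of_none hf]; simp
  · rw [gluePar_of_some hf]; simp

/-- Glue a tree `Y` on top of a forest `F` whose roots are leaves of `Y`. -/
def glue (Y F : PForest p)
    (h1 : ∀ v ∈ Y.verts, v ∈ F.verts → F.par v = none)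
    (h2 : ∀ v ∈ Y.verts, v ∈ F.verts → Y.IsLeaf v) : PForest p where
  verts := Y.verts ∪ F.verts
  par := gluePar Y F
  par_eq_none_of_not_mem v hv := by
    rw [Finset.mem_union] at hv
    push_neg at hv
    rw [gluePar_eq_none]
    exact ⟨F.par_eq_none_of_not_mem v hv.2, Y.par_eq_none_of_not_mem v hv.1⟩
  par_mem v hv w s h := by
    rw [Finset.mem_union]
    rcases gluePar_cases h with h' | ⟨_, h'⟩
    · exact Or.inr (F.par_mem v (mem_of_par_some h') w s h')
    · exact Or.inl (Y.par_mem v (mem_of_par_some h') w s h')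
  par_inj u hu v hv w s hpu hpv := by
    rcases gluePar_cases hpu with h1' | ⟨hn1, h1'⟩ <;>
      rcases gluePar_cases hpv with h2' | ⟨hn2, h2'⟩
    · exact F.par_inj u (mem_of_par_some h1') v (mem_of_par_some h2') w s h1' h2'
    · -- F-edge into w and Y-edge into w: impossible since w is a leaf of Y
      have hwF : w ∈ F.verts := F.par_mem u (mem_of_par_some h1') w s h1'
      have hwY : w ∈ Y.verts := Y.par_mem v (mem_of_par_some h2') w s h2'
      exact absurd h2' (h2 w hwY hwF v s)
    · have hwF : w ∈ F.verts := F.par_mem v (mem_of_par_some h2') w s h2'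
      have hwY : w ∈ Y.verts := Y.par_mem u (mem_of_par_some h1') w s h1'
      exact absurd h1' (h2 w hwY hwF u s)
    · exact Y.par_inj u (mem_of_par_some h1') v (mem_of_par_some h2') w s h1' h2'
  reaches_root v hv := by
    have hFnone : ∀ w ∈ Y.verts, F.par w = none := by
      intro w hw
      by_cases hwF : w ∈ F.verts
      · exact h1 w hw hwF
      · exact F.par_eq_none_of_not_mem w hwF
    have reachY : ∀ j v, Y.par (Y.step^[j] v) = none → F.par v = none →
        ∃ i, gluePar Y F ((fun x => ((gluePar Y F x).map Prod.fst).getD x)^[i] v) = none := by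
      intro j
      induction j with
      | zero =>
        intro v hY hF
        refine ⟨0, ?_⟩
        rw [Function.iterate_zero_apply] at hY ⊢
        rw [gluePar_eq_none]
        exact ⟨hF, hY⟩
      | succ j ih =>
        intro v hY hF
        rcases hYv : Y.par v with _ | ⟨w, s⟩
        · exact ⟨0, by rw [Function.iterate_zero_apply, gluePar_eq_none]; exact ⟨hF, hYv⟩⟩
        · have hwY : w ∈ Y.verts := Y.par_mem v (mem_of_par_some hYv) w s hYv
          rw [Function.iterate_succ_apply, step_eq_of_par hYv] at hY
          obtain ⟨i, hi⟩ := ih w hY (hFnone w hwY)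
          refine ⟨i + 1, ?_⟩
          rw [Function.iterate_succ_apply]
          have hgv : gluePar Y F v = some (w, s) := by rw [gluePar_of_none hF]; exact hYv
          have : ((gluePar Y F v).map Prod.fst).getD v = w := by simp [hgv]
          rw [this]
          exact hi
    have reachF : ∀ j v, F.par (F.step^[j] v) = none →
        ∃ i, gluePar Y F ((fun x => ((gluePar Y F x).map Prod.fst).getD x)^[i] v) = none := by
      intro j
      induction j with
      | zero =>
        intro v hFv
        rw [Function.iterate_zero_apply] at hFv
        rcases hYv : Y.par v with _ | ⟨w, s⟩
        · exact ⟨0, by rw [Function.iterate_zero_apply, gluePar_eq_none]; exact ⟨hFv, hYv⟩⟩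
        · have hwY : w ∈ Y.verts := Y.par_mem v (mem_of_par_some hYv) w s hYv
          obtain ⟨jY, hjY⟩ := Y.reaches_root' hwY
          obtain ⟨i, hi⟩ := reachY jY w hjY (hFnone w hwY)
          refine ⟨i + 1, ?_⟩
          rw [Function.iterate_succ_apply]
          have hgv : gluePar Y F v = some (w, s) := by rw [gluePar_of_none hFv]; exact hYv
          have : ((gluePar Y F v).map Prod.fst).getD v = w := by simp [hgv]
          rw [this]
          exact hi
      | succ j ih =>
        intro v hFv
        rcases hf : F.par v with _ | ⟨w, s⟩
        · rcases hYv : Y.par v with _ | ⟨w, s⟩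
          · exact ⟨0, by rw [Function.iterate_zero_apply, gluePar_eq_none]; exact ⟨hf, hYv⟩⟩
          · have hwY : w ∈ Y.verts := Y.par_mem v (mem_of_par_some hYv) w s hYv
            obtain ⟨jY, hjY⟩ := Y.reaches_root' hwY
            obtain ⟨i, hi⟩ := reachY jY w hjY (hFnone w hwY)
            refine ⟨i + 1, ?_⟩
            rw [Function.iterate_succ_apply]
            have hgv : gluePar Y F v = some (w, s) := by rw [gluePar_of_none hf]; exact hYv
            have : ((gluePar Y F v).map Prod.fst).getD v = w := by simp [hgv]
            rw [this]
            exact hi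
        · rw [Function.iterate_succ_apply, step_eq_of_par hf] at hFv
          obtain ⟨i, hi⟩ := ih w hFv
          refine ⟨i + 1, ?_⟩
          rw [Function.iterate_succ_apply]
          have hgv : gluePar Y F v = some (w, s) := gluePar_of_some hf
          have : ((gluePar Y F v).map Prod.fst).getD v = w := by simp [hgv]
          rw [this]
          exact hi
    rw [Finset.mem_union] at hv
    by_cases hvF : v ∈ F.verts
    · obtain ⟨j, hj⟩ := F.reaches_root' hvF
      exact reachF j v hj
    · have hvY : v ∈ Y.verts := by tauto
      obtain ⟨j, hj⟩ := Y.reaches_root' hvY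
      exact reachY j v hj (F.par_eq_none_of_not_mem v hvF)

theorem glue_verts (Y F : PForest p) (h1) (h2) :
    (glue Y F h1 h2).verts = Y.verts ∪ F.verts := rfl

theorem glue_par (Y F : PForest p) (h1) (h2) (v : ℕ) :
    (glue Y F h1 h2).par v = gluePar Y F v := rfl

theorem glue_par_of_Y {Y F : PForest p} {h1 h2} {v : ℕ} (hv : v ∈ Y.verts) :
    (glue Y F h1 h2).par v = Y.par v := by
  rw [glue_par, gluePar_of_none]
  by_cases hvF : v ∈ F.verts
  · exact h1 v hv hvF
  · exact F.par_eq_none_of_not_mem v hvF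

end PForest
end Glue
section Finiteness
namespace PForest

variable {p : ℕ}

private def omap (V : Finset ℕ) (o : Option (ℕ × Fin p)) : Option ({x // x ∈ V} × Fin p) :=
  o.bind (fun ws => if h : ws.1 ∈ V then some (⟨ws.1, h⟩, ws.2) else none)

private theorem omap_inj {V : Finset ℕ} {o₁ o₂ : Option (ℕ × Fin p)}
    (h₁ : ∀ w s, o₁ = some (w, s) → w ∈ V) (h₂ : ∀ w s, o₂ = some (w, s) → w ∈ V)
    (h : omap V o₁ = omap V o₂) : o₁ = o₂ := by
  rcases o₁ with _ | ⟨w₁, s₁⟩ <;> rcases o₂ with _ | ⟨w₂, s₂⟩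
  · rfl
  · have hw := h₂ w₂ s₂ rfl
    simp [omap, hw] at h
  · have hw := h₁ w₁ s₁ rfl
    simp [omap, hw] at h
  · have hw₁ := h₁ w₁ s₁ rfl
    have hw₂ := h₂ w₂ s₂ rfl
    simp only [omap, Option.bind_some, dif_pos hw₁, dif_pos hw₂,
      Option.some.injEq, Prod.mk.injEq] at h
    obtain ⟨h1, h2⟩ := h
    have hw : w₁ = w₂ := congrArg Subtype.val h1
    rw [hw, h2]

theorem finite_subforests (V : Finset ℕ) : Finite {T : PForest p // T.verts ⊆ V} := by
  have hinj : Function.Injective (fun T : {T : PForest p // T.verts ⊆ V} =>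
      ((⟨T.1.verts, Finset.mem_powerset.2 T.2⟩ : {W // W ∈ V.powerset}),
       fun v : {x // x ∈ V} => omap V (T.1.par v.1))) := by
    intro T U h
    have h1 := congrArg Prod.fst h
    have h2 := congrArg Prod.snd h
    simp only at h1 h2
    apply Subtype.ext
    refine ext' (congrArg Subtype.val h1) ?_
    funext v
    by_cases hv : v ∈ V
    · have heq := congrFun h2 ⟨v, hv⟩
      exact omap_inj
        (fun w s hws => T.2 (T.1.par_mem v (mem_of_par_some hws) w s hws))
        (fun w s hws => U.2 (U.1.par_mem v (mem_of_par_some hws) w s hws)) heq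
    · rw [T.1.par_eq_none_of_not_mem v (fun hm => hv (T.2 hm)),
        U.1.par_eq_none_of_not_mem v (fun hm => hv (U.2 hm))]
  exact Finite.of_injective _ hinj

theorem finite_cond (V : Finset ℕ) (P : PForest p → Prop)
    (hP : ∀ T, P T → T.verts ⊆ V) : Finite {T : PForest p // P T} := by
  have := finite_subforests (p := p) V
  exact Finite.of_injective
    (fun T : {T : PForest p // P T} => (⟨T.1, hP T.1 T.2⟩ : {T : PForest p // T.verts ⊆ V}))
    (by intro T U h; simp only [Subtype.mk.injEq] at h; exact Subtype.ext h)

end PForest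
end Finiteness

theorem nat_card_sigma {ι : Type*} [Fintype ι] (β : ι → Type*) [∀ i, Finite (β i)] :
    Nat.card (Σ i, β i) = ∑ i : ι, Nat.card (β i) := by
  letI : ∀ i, Fintype (β i) := fun i => Fintype.ofFinite _
  simp [Nat.card_eq_fintype_card]
section Perms

/-- Build a permutation of `ℕ` from bijections between pieces. -/
noncomputable def piecePerm (A₁ A₂ B₁ B₂ : Finset ℕ)
    (e₁ : {x // x ∈ A₁} ≃ {x // x ∈ B₁}) (e₂ : {x // x ∈ A₂} ≃ {x // x ∈ B₂})
    (hA : Disjoint A₁ A₂) (hB : Disjoint B₁ B₂) (hU : A₁ ∪ A₂ = B₁ ∪ B₂) : ℕ ≃ ℕ where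
  toFun x := if h : x ∈ A₁ then e₁ ⟨x, h⟩ else if h : x ∈ A₂ then e₂ ⟨x, h⟩ else x
  invFun y := if h : y ∈ B₁ then e₁.symm ⟨y, h⟩ else if h : y ∈ B₂ then e₂.symm ⟨y, h⟩ else y
  left_inv x := by
    beta_reduce
    by_cases h1 : x ∈ A₁
    · rw [dif_pos h1]
      have hb : ((e₁ ⟨x, h1⟩ : {x // x ∈ B₁}) : ℕ) ∈ B₁ := (e₁ ⟨x, h1⟩).2
      rw [dif_pos hb]
      have : (⟨(e₁ ⟨x, h1⟩ : {x // x ∈ B₁}), hb⟩ : {x // x ∈ B₁}) = e₁ ⟨x, h1⟩ :=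
        Subtype.ext rfl
      rw [this, Equiv.symm_apply_apply]
    · by_cases h2 : x ∈ A₂
      · rw [dif_neg h1, dif_pos h2]
        have hb : ((e₂ ⟨x, h2⟩ : {x // x ∈ B₂}) : ℕ) ∈ B₂ := (e₂ ⟨x, h2⟩).2
        have hnb : ((e₂ ⟨x, h2⟩ : {x // x ∈ B₂}) : ℕ) ∉ B₁ := by
          intro hmem
          exact (Finset.disjoint_left.1 hB) hmem hb
        rw [dif_neg hnb, dif_pos hb]
        have : (⟨(e₂ ⟨x, h2⟩ : {x // x ∈ B₂}), hb⟩ : {x // x ∈ B₂}) = e₂ ⟨x, h2⟩ :=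
          Subtype.ext rfl
        rw [this, Equiv.symm_apply_apply]
      · rw [dif_neg h1, dif_neg h2]
        have hx : x ∉ B₁ ∪ B₂ := by
          rw [← hU, Finset.mem_union]
          tauto
        rw [Finset.mem_union] at hx
        push_neg at hx
        rw [dif_neg hx.1, dif_neg hx.2]
  right_inv y := by
    beta_reduce
    by_cases h1 : y ∈ B₁
    · rw [dif_pos h1]
      have hb : ((e₁.symm ⟨y, h1⟩ : {x // x ∈ A₁}) : ℕ) ∈ A₁ := (e₁.symm ⟨y, h1⟩).2
      rw [dif_pos hb]
      have : (⟨(e₁.symm ⟨y, h1⟩ : {x // x ∈ A₁}), hb⟩ : {x // x ∈ A₁}) = e₁.symm ⟨y, h1⟩ :=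
        Subtype.ext rfl
      rw [this, Equiv.apply_symm_apply]
    · by_cases h2 : y ∈ B₂
      · rw [dif_neg h1, dif_pos h2]
        have hb : ((e₂.symm ⟨y, h2⟩ : {x // x ∈ A₂}) : ℕ) ∈ A₂ := (e₂.symm ⟨y, h2⟩).2
        have hnb : ((e₂.symm ⟨y, h2⟩ : {x // x ∈ A₂}) : ℕ) ∉ A₁ := by
          intro hmem
          exact (Finset.disjoint_left.1 hA) hmem hb
        rw [dif_neg hnb, dif_pos hb]
        have : (⟨(e₂.symm ⟨y, h2⟩ : {x // x ∈ A₂}), hb⟩ : {x // x ∈ A₂}) = e₂.symm ⟨y, h2⟩ :=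
          Subtype.ext rfl
        rw [this, Equiv.apply_symm_apply]
      · rw [dif_neg h1, dif_neg h2]
        have hy : y ∉ A₁ ∪ A₂ := by
          rw [hU, Finset.mem_union]
          tauto
        rw [Finset.mem_union] at hy
        push_neg at hy
        rw [dif_neg hy.1, dif_neg hy.2]

theorem exists_perm_two (A₁ A₂ B₁ B₂ : Finset ℕ)
    (h1 : A₁.card = B₁.card) (h2 : A₂.card = B₂.card)
    (hA : Disjoint A₁ A₂) (hB : Disjoint B₁ B₂) (hU : A₁ ∪ A₂ = B₁ ∪ B₂) :
    ∃ σ : ℕ ≃ ℕ, A₁.image σ = B₁ ∧ A₂.image σ = B₂ ∧ StrictMonoOn σ (A₁ : Set ℕ) := by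
  have e₁ : {x // x ∈ A₁} ≃o {x // x ∈ B₁} :=
    (A₁.orderIsoOfFin rfl).symm.trans (B₁.orderIsoOfFin h1.symm)
  have e₂ : {x // x ∈ A₂} ≃ {x // x ∈ B₂} :=
    ((A₂.orderIsoOfFin rfl).symm.trans (B₂.orderIsoOfFin h2.symm)).toEquiv
  refine ⟨piecePerm A₁ A₂ B₁ B₂ e₁.toEquiv e₂ hA hB hU, ?_, ?_, ?_⟩
  · apply Finset.eq_of_subset_of_card_le
    · intro y hy
      obtain ⟨x, hx, rfl⟩ := Finset.mem_image.1 hy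
      show (if h : x ∈ A₁ then _ else _) ∈ B₁
      rw [dif_pos hx]
      exact (e₁ ⟨x, hx⟩).2
    · rw [Finset.card_image_of_injective _ (Equiv.injective _), h1]
  · apply Finset.eq_of_subset_of_card_le
    · intro y hy
      obtain ⟨x, hx, rfl⟩ := Finset.mem_image.1 hy
      have hx1 : x ∉ A₁ := Finset.disjoint_right.1 hA hx
      show (if h : x ∈ A₁ then _ else _) ∈ B₂
      rw [dif_neg hx1, dif_pos hx]
      exact (e₂ ⟨x, hx⟩).2
    · rw [Finset.card_image_of_injective _ (Equiv.injective _), h2]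
  · intro x hx y hy hxy
    rw [Finset.mem_coe] at hx hy
    show (if h : x ∈ A₁ then ((e₁ ⟨x, h⟩ : {z // z ∈ B₁}) : ℕ) else _)
      < (if h : y ∈ A₁ then ((e₁ ⟨y, h⟩ : {z // z ∈ B₁}) : ℕ) else _)
    rw [dif_pos hx, dif_pos hy]
    have : (⟨x, hx⟩ : {z // z ∈ A₁}) < ⟨y, hy⟩ := Subtype.mk_lt_mk.2 hxy
    exact Subtype.coe_lt_coe.2 (e₁.lt_iff_lt.2 this)

end Perms
section Counting
namespace PForest

variable {p : ℕ}

/-- Transfer of forest counts with prescribed roots along a permutation. -/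
theorem card_FR_eq {V R V' R' : Finset ℕ} (σ : ℕ ≃ ℕ)
    (hV : V.image σ = V') (hR : R.image σ = R') :
    Nat.card {F : PForest p // F.verts = V ∧ F.roots = R}
      = Nat.card {F : PForest p // F.verts = V' ∧ F.roots = R'} := by
  subst hV; subst hR
  apply Nat.card_congr
  refine ⟨fun F => ⟨relabel σ F.1, ?_, ?_⟩, fun F => ⟨relabel σ.symm F.1, ?_, ?_⟩, ?_, ?_⟩
  · rw [relabel_verts, F.2.1]
  · rw [relabel_roots, F.2.2]
  · rw [relabel_verts, F.2.1, Finset.image_image]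
    simp
  · rw [relabel_roots, F.2.2, Finset.image_image]
    simp
  · intro F
    exact Subtype.ext (relabel_relabel_symm σ F.1)
  · intro F
    apply Subtype.ext
    have := relabel_relabel_symm σ.symm F.1
    simpa using this

/-- Transfer of forest counts with a prescribed number of roots. -/
theorem card_FN_eq {V V' : Finset ℕ} (σ : ℕ ≃ ℕ) (hV : V.image σ = V') (j : ℕ) :
    Nat.card {F : PForest p // F.verts = V ∧ F.roots.card = j}
      = Nat.card {F : PForest p // F.verts = V' ∧ F.roots.card = j} := by
  subst hV
  apply Nat.card_congr
  refine ⟨fun F => ⟨relabel σ F.1, ?_, ?_⟩, fun F => ⟨relabel σ.symm F.1, ?_, ?_⟩, ?_, ?_⟩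
  · rw [relabel_verts, F.2.1]
  · rw [relabel_roots, Finset.card_image_of_injective _ σ.injective, F.2.2]
  · rw [relabel_verts, F.2.1, Finset.image_image]
    simp
  · rw [relabel_roots, Finset.card_image_of_injective _ σ.symm.injective, F.2.2]
  · intro F
    exact Subtype.ext (relabel_relabel_symm σ F.1)
  · intro F
    apply Subtype.ext
    have := relabel_relabel_symm σ.symm F.1
    simpa using this

/-- The number of forests on `V` with prescribed root set `R`, multiplied by
`choose (|V|, |R|)`, equals the number of forests on `[|V|]` with `|R|` roots. -/
theorem card_FR_mul (V R : Finset ℕ) (hR : R ⊆ V) :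
    Nat.card {F : PForest p // F.verts = V ∧ F.roots = R} * V.card.choose R.card
      = f p V.card R.card := by
  have hIccCard : (Finset.Icc 1 V.card).card = V.card := by rw [Nat.card_Icc]; omega
  have step1 : f p V.card R.card
      = Nat.card {F : PForest p // F.verts = V ∧ F.roots.card = R.card} := by
    obtain ⟨σ, hV1, _, _⟩ := exists_perm_two (Finset.Icc 1 V.card) (V \ Finset.Icc 1 V.card)
      V (Finset.Icc 1 V.card \ V)
      (by rw [hIccCard])
      (Finset.card_sdiff_comm (by rw [hIccCard]))
      (Finset.disjoint_sdiff) (Finset.disjoint_sdiff)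
      (by rw [Finset.union_sdiff_self_eq_union, Finset.union_sdiff_self_eq_union,
          Finset.union_comm])
    exact card_FN_eq σ hV1 R.card
  -- Step 2: decomposition over root sets
  have hfin : ∀ R' : Finset ℕ, Finite {F : PForest p // F.verts = V ∧ F.roots = R'} := by
    intro R'
    exact finite_cond V _ (fun T hT => by simp [hT.1])
  have hfin2 : Finite {F : PForest p // F.verts = V ∧ F.roots.card = R.card} :=
    finite_cond V _ (fun T hT => by simp [hT.1])
  have step2 : Nat.card {F : PForest p // F.verts = V ∧ F.roots.card = R.card}
      = ∑ R' : {R' // R' ∈ V.powersetCard R.card},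
          Nat.card {F : PForest p // F.verts = V ∧ F.roots = R'.1} := by
    rw [← nat_card_sigma]
    apply Nat.card_congr
    refine ⟨fun F => ⟨⟨F.1.roots, ?_⟩, ⟨F.1, F.2.1, rfl⟩⟩,
      fun x => ⟨x.2.1, x.2.2.1, by
        rw [x.2.2.2]
        exact (Finset.mem_powersetCard.1 x.1.2).2⟩, ?_, ?_⟩
    · rw [Finset.mem_powersetCard]
      exact ⟨(roots_subset F.1).trans (le_of_eq F.2.1), F.2.2⟩
    · intro F
      exact Subtype.ext rfl
    · rintro ⟨⟨R', hR'⟩, ⟨F, hF⟩⟩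
      have hroots : F.roots = R' := hF.2
      subst hroots
      rfl
  -- Step 3: constancy
  have step3 : ∀ R' ∈ V.powersetCard R.card,
      Nat.card {F : PForest p // F.verts = V ∧ F.roots = R'}
        = Nat.card {F : PForest p // F.verts = V ∧ F.roots = R} := by
    intro R' hR'
    rw [Finset.mem_powersetCard] at hR'
    obtain ⟨σ, h1, h2, _⟩ := exists_perm_two R' (V \ R') R (V \ R)
      (by rw [hR'.2]) (by rw [Finset.card_sdiff_of_subset hR'.1, Finset.card_sdiff_of_subset hR, hR'.2])
      (Finset.disjoint_sdiff) (Finset.disjoint_sdiff)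
      (by rw [Finset.union_sdiff_of_subset hR'.1, Finset.union_sdiff_of_subset hR])
    refine card_FR_eq σ ?_ h1
    have hV' : V = R' ∪ (V \ R') := (Finset.union_sdiff_of_subset hR'.1).symm
    conv_lhs => rw [hV']
    rw [Finset.image_union, h1, h2, Finset.union_sdiff_of_subset hR]
  have step4 : ∑ R' : {R' // R' ∈ V.powersetCard R.card},
      Nat.card {F : PForest p // F.verts = V ∧ F.roots = R'.1}
      = V.card.choose R.card * Nat.card {F : PForest p // F.verts = V ∧ F.roots = R} := by
    rw [Finset.sum_congr rfl (fun R' _ => step3 R'.1 R'.2), Finset.sum_const, smul_eq_mul,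
      Finset.card_univ, Fintype.card_coe, Finset.card_powersetCard]
  rw [step1, step2, step4, mul_comm]

end PForest
end Counting

section YCount
namespace PForest

variable {p : ℕ}

private theorem ypack (σ : ℕ ≃ ℕ) (Y : PForest p)
    (hmono : StrictMonoOn σ (Y.verts : Set ℕ))
    (h2 : Y.roots.card = 1) {kk : ℕ} (h3 : Y.mdSet.card = kk)
    (h4 : ∀ v ∈ Y.verts, ¬Y.InMD v → Y.IsLeaf v) :
    (relabel σ Y).roots.card = 1 ∧ (relabel σ Y).mdSet.card = kk ∧
      ∀ v ∈ (relabel σ Y).verts, ¬(relabel σ Y).InMD v → (relabel σ Y).IsLeaf v := by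
  refine ⟨?_, ?_, ?_⟩
  · rw [relabel_roots, Finset.card_image_of_injective _ σ.injective, h2]
  · rw [relabel_mdSet hmono, Finset.card_image_of_injective _ σ.injective, h3]
  · intro v hv hmd
    rw [relabel_verts] at hv
    obtain ⟨x, hx, rfl⟩ := Finset.mem_image.1 hv
    rw [relabel_isLeaf_iff]
    refine h4 x hx (fun hin => hmd ?_)
    exact (relabel_inMD_iff hmono hx).2 hin

theorem card_Ylike (S : Finset ℕ) (m kk : ℕ) (hScard : S.card = m) (hm : 1 ≤ m) :
    Nat.card {Y : PForest p // Y.verts = S ∧ Y.roots.card = 1 ∧ Y.mdSet.card = kk ∧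
      ∀ v ∈ Y.verts, ¬Y.InMD v → Y.IsLeaf v} = y p m kk := by
  have hIccCard : (Finset.Icc 1 m).card = m := by rw [Nat.card_Icc]; omega
  obtain ⟨σ, h1, _, hmono⟩ := exists_perm_two S (Finset.Icc 1 m \ S)
    (Finset.Icc 1 m) (S \ Finset.Icc 1 m)
    (by rw [hScard, hIccCard])
    (by rw [Finset.card_sdiff_comm]; rw [hIccCard, hScard])
    Finset.disjoint_sdiff Finset.disjoint_sdiff
    (by rw [Finset.union_sdiff_self_eq_union, Finset.union_sdiff_self_eq_union,
      Finset.union_comm])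
  have hmono' : StrictMonoOn σ.symm ((Finset.Icc 1 m : Finset ℕ) : Set ℕ) := by
    rw [← h1]
    exact strictMonoOn_symm_image hmono
  unfold y
  have hmin : min m 1 = 1 := by omega
  apply Nat.card_congr
  refine ⟨fun Y => ⟨relabel σ Y.1, ?_⟩, fun T => ⟨relabel σ.symm T.1, ?_⟩, ?_, ?_⟩
  · obtain ⟨hY1, hY2, hY3, hY4⟩ := Y.2
    have hmonoY : StrictMonoOn σ (Y.1.verts : Set ℕ) := by rw [hY1]; exact hmono
    obtain ⟨g2, g3, g4⟩ := ypack σ Y.1 hmonoY hY2 hY3 hY4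
    have hverts : (relabel σ Y.1).verts = Finset.Icc 1 m := by
      rw [relabel_verts, hY1, h1]
    exact ⟨⟨hverts, by rw [g2, hmin]⟩, g3, g4⟩
  · obtain ⟨⟨hT1, hT2⟩, hT3, hT4⟩ := T.2
    have hmonoT : StrictMonoOn σ.symm (T.1.verts : Set ℕ) := by rw [hT1]; exact hmono'
    rw [hmin] at hT2
    obtain ⟨g2, g3, g4⟩ := ypack σ.symm T.1 hmonoT hT2 hT3 hT4
    have hverts : (relabel σ.symm T.1).verts = S := by
      rw [relabel_verts, hT1, ← h1, Finset.image_image]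
      simp
    exact ⟨hverts, g2, g3, g4⟩
  · intro Y
    exact Subtype.ext (relabel_relabel_symm σ Y.1)
  · intro T
    apply Subtype.ext
    have := relabel_relabel_symm σ.symm T.1
    simpa using this

end PForest
end YCount
section MainRestrict
namespace PForest

variable {p : ℕ}

/-- The vertex set of the subtree `Y`: `MD(T)` together with its increasing
leaves. -/
noncomputable def yset (T : PForest p) : Finset ℕ :=
  T.verts.filter (fun v => T.InMD v ∨ ∃ w s, T.par v = some (w, s) ∧ T.InMD w)

theorem yset_subset (T : PForest p) : T.yset ⊆ T.verts := Finset.filter_subset _ _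

theorem mem_yset {T : PForest p} {v : ℕ} : v ∈ T.yset ↔ v ∈ T.verts ∧
    (T.InMD v ∨ ∃ w s, T.par v = some (w, s) ∧ T.InMD w) := by
  simp [yset]

theorem mdSet_subset_yset (T : PForest p) : T.mdSet ⊆ T.yset := by
  intro v hv
  rw [mem_mdSet] at hv
  exact mem_yset.2 ⟨hv.mem, Or.inl hv⟩

theorem parent_mem_mdSet {T : PForest p} {v w : ℕ} {s : Fin p}
    (hv : v ∈ T.yset) (hp : T.par v = some (w, s)) : w ∈ T.mdSet := by
  rcases (mem_yset.1 hv).2 with h | ⟨w', s', hp', hmd⟩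
  · exact mem_mdSet.2 (h.par hp)
  · rw [hp'] at hp
    injection hp with hp
    injection hp with h1 h2
    rw [← h1]
    exact mem_mdSet.2 hmd

theorem restrictY_par {T : PForest p} {v : ℕ} (hv : v ∈ T.yset) :
    (T.restrict T.yset).par v = T.par v := by
  rw [restrict_par]
  rcases hp : T.par v with _ | ⟨w, s⟩
  · exact restrictPar_eq_none_of_par_none hp
  · exact restrictPar_of_mem hv (mdSet_subset_yset T (parent_mem_mdSet hv hp)) hp

theorem restrictY_verts (T : PForest p) : (T.restrict T.yset).verts = T.yset := by
  rw [restrict_verts]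
  exact Finset.inter_eq_right.2 (yset_subset T)

theorem yset_step_closed {T : PForest p} {v : ℕ} (hv : v ∈ T.yset) :
    T.step v ∈ T.yset := by
  rcases hp : T.par v with _ | ⟨w, s⟩
  · rwa [step_eq_of_none hp]
  · rw [step_eq_of_par hp]
    exact mdSet_subset_yset T (parent_mem_mdSet hv hp)

theorem restrictY_inMD_iff {T : PForest p} {v : ℕ} (hv : v ∈ T.yset) :
    (T.restrict T.yset).InMD v ↔ T.InMD v := by
  refine inMD_congr (C := T.yset) (fun u hu => restrictY_par hu)
    (fun u hu => yset_step_closed hu) ?_ hv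
  rw [restrictY_verts]
  exact iff_of_true hv (yset_subset T hv)

theorem restrictY_mdSet (T : PForest p) : (T.restrict T.yset).mdSet = T.mdSet := by
  ext v
  rw [mem_mdSet, mem_mdSet]
  constructor
  · intro h
    have hv : v ∈ T.yset := by
      have := h.mem
      rwa [restrictY_verts] at this
    exact (restrictY_inMD_iff hv).1 h
  · intro h
    have hv : v ∈ T.yset := mdSet_subset_yset T (mem_mdSet.2 h)
    exact (restrictY_inMD_iff hv).2 h

theorem restrictY_roots (T : PForest p) : (T.restrict T.yset).roots = T.roots := by
  ext v
  rw [mem_roots, mem_roots, restrictY_verts]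
  constructor
  · rintro ⟨hv, hpar⟩
    rw [restrictY_par hv] at hpar
    exact ⟨yset_subset T hv, hpar⟩
  · rintro ⟨hv, hpar⟩
    have hmd : v ∈ T.yset := mdSet_subset_yset T (mem_mdSet.2 (root_inMD hv hpar))
    exact ⟨hmd, by rw [restrictY_par hmd]; exact hpar⟩

theorem restrictY_leaf (T : PForest p) :
    ∀ v ∈ (T.restrict T.yset).verts, ¬(T.restrict T.yset).InMD v →
      (T.restrict T.yset).IsLeaf v := by
  intro v hv hmd
  rw [restrictY_verts] at hv
  have hvT : ¬T.InMD v := fun h => hmd ((restrictY_inMD_iff hv).2 h)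
  intro u s hu
  rw [restrict_par] at hu
  obtain ⟨hu1, hv1, hu2⟩ := restrictPar_eq_some.1 hu
  exact hvT (mem_mdSet.1 (parent_mem_mdSet hu1 hu2))

theorem restrictF_verts {T : PForest p} {W : Finset ℕ} (hW : T.verts = W) :
    (T.restrict (W \ T.mdSet)).verts = W \ T.mdSet := by
  rw [restrict_verts, hW]
  exact Finset.inter_eq_right.2 (Finset.sdiff_subset)

theorem restrictF_roots {T : PForest p} {W : Finset ℕ} (hW : T.verts = W) :
    (T.restrict (W \ T.mdSet)).roots = T.yset \ T.mdSet := by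
  ext v
  rw [mem_roots, restrictF_verts hW, restrict_par, Finset.mem_sdiff, Finset.mem_sdiff]
  constructor
  · rintro ⟨⟨hvW, hvA⟩, hpar⟩
    have hvT : v ∈ T.verts := hW ▸ hvW
    rcases hp : T.par v with _ | ⟨w, s⟩
    · exact absurd (mem_mdSet.2 (root_inMD hvT hp)) hvA
    · have hw : w ∈ T.verts := T.par_mem v hvT w s hp
      by_cases hwA : w ∈ T.mdSet
      · exact ⟨mem_yset.2 ⟨hvT, Or.inr ⟨w, s, hp, mem_mdSet.1 hwA⟩⟩, hvA⟩
      · have : restrictPar T (W \ T.mdSet) v = some (w, s) :=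
          restrictPar_of_mem (Finset.mem_sdiff.2 ⟨hvW, hvA⟩)
            (Finset.mem_sdiff.2 ⟨hW ▸ hw, hwA⟩) hp
        rw [this] at hpar
        cases hpar
  · rintro ⟨hvS, hvA⟩
    have hvT : v ∈ T.verts := yset_subset T hvS
    refine ⟨⟨hW ▸ hvT, hvA⟩, ?_⟩
    rcases hp : T.par v with _ | ⟨w, s⟩
    · exact restrictPar_eq_none_of_par_none hp
    · have hw : w ∈ T.mdSet := parent_mem_mdSet hvS hp
      exact restrictPar_eq_none_of_cut hp (fun hmem => (Finset.mem_sdiff.1 hmem).2 hw)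

theorem glue_restrict {T : PForest p} {W : Finset ℕ} (hW : T.verts = W) (h1 h2) :
    glue (T.restrict T.yset) (T.restrict (W \ T.mdSet)) h1 h2 = T := by
  have hAS : T.mdSet ⊆ T.yset := mdSet_subset_yset T
  refine ext' ?_ ?_
  · rw [glue_verts, restrictY_verts, restrictF_verts hW]
    ext x
    rw [Finset.mem_union, Finset.mem_sdiff, hW]
    constructor
    · rintro (h | h)
      · exact hW ▸ yset_subset T h
      · exact h.1
    · intro hx
      by_cases hxS : x ∈ T.yset
      · exact Or.inl hxS
      · exact Or.inr ⟨hx, fun hmem => hxS (hAS hmem)⟩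
  · funext v
    rw [glue_par]
    by_cases hvT : v ∈ T.verts
    · by_cases hvS : v ∈ T.yset
      · -- v in yset: the F-part parent is none, glue gives Y's parent
        have hF : (T.restrict (W \ T.mdSet)).par v = none := by
          rw [restrict_par]
          by_cases hvA : v ∈ T.mdSet
          · exact restrictPar_eq_none_of_not_mem
              (fun hmem => (Finset.mem_sdiff.1 hmem).2 hvA)
          · rcases hp : T.par v with _ | ⟨w, s⟩
            · exact restrictPar_eq_none_of_par_none hp
            · exact restrictPar_eq_none_of_cut hp
                (fun hmem => (Finset.mem_sdiff.1 hmem).2 (parent_mem_mdSet hvS hp))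
        rw [gluePar_of_none hF, restrictY_par hvS]
      · -- v outside yset: parent is not in mdSet, edge survives in F
        rcases hp : T.par v with _ | ⟨w, s⟩
        · exact absurd (mem_yset.2 ⟨hvT, Or.inl (root_inMD hvT hp)⟩) hvS
        · have hwA : w ∉ T.mdSet := by
            intro hwA
            exact hvS (mem_yset.2 ⟨hvT, Or.inr ⟨w, s, hp, mem_mdSet.1 hwA⟩⟩)
          have hvA : v ∉ T.mdSet := fun h => hvS (hAS h)
          have hw : w ∈ T.verts := T.par_mem v hvT w s hp
          have hF : (T.restrict (W \ T.mdSet)).par v = some (w, s) := by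
            rw [restrict_par]
            exact restrictPar_of_mem (Finset.mem_sdiff.2 ⟨hW ▸ hvT, hvA⟩)
              (Finset.mem_sdiff.2 ⟨hW ▸ hw, hwA⟩) hp
          rw [gluePar_of_some hF]
    · have hnone : T.par v = none := T.par_eq_none_of_not_mem v hvT
      rw [hnone, gluePar_eq_none]
      constructor <;> rw [restrict_par] <;> exact restrictPar_eq_none_of_par_none hnone

end PForest
end MainRestrict
section MainGlue
namespace PForest

variable {p : ℕ}

theorem glue_side {S W : Finset ℕ} {Y F : PForest p}
    (hYv : Y.verts = S) (hYr : Y.roots.card = 1)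
    (hleaf : ∀ v ∈ Y.verts, ¬Y.InMD v → Y.IsLeaf v)
    (hAne : Y.mdSet.Nonempty) (hSW : S ⊆ W)
    (hFv : F.verts = W \ Y.mdSet) (hFr : F.roots = S \ Y.mdSet)
    (h1 : ∀ v ∈ Y.verts, v ∈ F.verts → F.par v = none)
    (h2 : ∀ v ∈ Y.verts, v ∈ F.verts → Y.IsLeaf v) :
    (glue Y F h1 h2).verts = W ∧
    (glue Y F h1 h2).roots.card = 1 ∧
    (glue Y F h1 h2).mdSet = Y.mdSet ∧
    (glue Y F h1 h2).yset = S ∧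
    (glue Y F h1 h2).restrict S = Y ∧
    (glue Y F h1 h2).restrict (W \ Y.mdSet) = F := by
  have hA : Y.mdSet ⊆ S := hYv ▸ mdSet_subset (T := Y)
  set G := glue Y F h1 h2 with hG
  -- vertices
  have hGv : G.verts = W := by
    rw [hG, glue_verts, hYv, hFv]
    ext x
    rw [Finset.mem_union, Finset.mem_sdiff]
    constructor
    · rintro (h | h)
      · exact hSW h
      · exact h.1
    · intro hx
      by_cases hxS : x ∈ S
      · exact Or.inl hxS
      · exact Or.inr ⟨hx, fun hmem => hxS (hA hmem)⟩
  -- parents of Y vertices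
  have hGpar_Y : ∀ v ∈ Y.verts, G.par v = Y.par v := fun v hv => glue_par_of_Y hv
  -- InMD on Y vertices
  have hGin : ∀ v ∈ Y.verts, (G.InMD v ↔ Y.InMD v) := by
    intro v hv
    refine inMD_congr (C := Y.verts) hGpar_Y (fun u hu => step_mem hu) ?_ hv
    exact iff_of_true (by rw [hG, glue_verts]; exact Finset.mem_union_left _ hv) hv
  -- F-only vertices are not in MD(G)
  have hreach : ∀ j v, v ∈ F.verts → F.par (F.step^[j] v) = none →
      ∃ i, G.step^[i] v ∈ F.roots := by
    intro j
    induction j with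
    | zero =>
      intro v hv h
      rw [Function.iterate_zero_apply] at h
      exact ⟨0, mem_roots.2 ⟨hv, h⟩⟩
    | succ j ih =>
      intro v hv h
      rcases hp : F.par v with _ | ⟨w, s⟩
      · exact ⟨0, mem_roots.2 ⟨hv, hp⟩⟩
      · rw [Function.iterate_succ_apply, step_eq_of_par hp] at h
        have hw : w ∈ F.verts := F.par_mem v hv w s hp
        obtain ⟨i, hi⟩ := ih w hw h
        refine ⟨i + 1, ?_⟩
        rw [Function.iterate_succ_apply,
          step_eq_of_par (T := G) (by rw [hG, glue_par]; exact gluePar_of_some hp)]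
        exact hi
  have hnotY : ∀ v ∈ F.verts, v ∉ Y.verts → ¬G.InMD v := by
    intro v hvF hvY hmd
    obtain ⟨j, hj⟩ := F.reaches_root' hvF
    obtain ⟨i, hi⟩ := hreach j v hvF hj
    rw [hFr, Finset.mem_sdiff] at hi
    have hrY : G.step^[i] v ∈ Y.verts := hYv ▸ hi.1
    have : Y.InMD (G.step^[i] v) := (hGin _ hrY).1 (hmd.iterate i)
    exact hi.2 (mem_mdSet.2 this)
  -- mdSet of G
  have hGmd : G.mdSet = Y.mdSet := by
    ext v
    rw [mem_mdSet, mem_mdSet]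
    constructor
    · intro h
      have hv := h.mem
      rw [hG, glue_verts, Finset.mem_union] at hv
      rcases hv with hv | hv
      · exact (hGin v hv).1 h
      · by_cases hvY : v ∈ Y.verts
        · exact (hGin v hvY).1 h
        · exact absurd h (hnotY v hv hvY)
    · intro h
      exact (hGin v h.mem).2 h
  -- the root
  obtain ⟨r, hr⟩ := Finset.card_eq_one.1 hYr
  have hrA : r ∈ Y.mdSet := by
    obtain ⟨u, hu⟩ := hAne
    obtain ⟨r', hr'1, hr'2⟩ := exists_root_of_inMD (mem_mdSet.1 hu)
    have : r' = r := by rw [hr] at hr'1; exact Finset.mem_singleton.1 hr'1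
    rw [← this]
    exact mem_mdSet.2 hr'2
  have hGroots : G.roots = {r} := by
    ext v
    rw [mem_roots, Finset.mem_singleton]
    constructor
    · rintro ⟨hv, hpar⟩
      rw [hG, glue_par, gluePar_eq_none] at hpar
      by_cases hvY : v ∈ Y.verts
      · have : v ∈ Y.roots := mem_roots.2 ⟨hvY, hpar.2⟩
        rw [hr] at this
        exact Finset.mem_singleton.1 this
      · rw [hG, glue_verts, Finset.mem_union] at hv
        have hvF : v ∈ F.verts := by tauto
        have : v ∈ F.roots := mem_roots.2 ⟨hvF, hpar.1⟩
        rw [hFr, Finset.mem_sdiff] at this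
        exact absurd (hYv ▸ this.1 : v ∈ Y.verts) hvY
    · rintro rfl
      have hrY : v ∈ Y.verts := hYv ▸ hA hrA
      have hrroot : v ∈ Y.roots := by rw [hr]; exact Finset.mem_singleton_self v
      refine ⟨by rw [hG, glue_verts]; exact Finset.mem_union_left _ hrY, ?_⟩
      rw [hG, glue_par, gluePar_eq_none]
      refine ⟨F.par_eq_none_of_not_mem v ?_, (mem_roots.1 hrroot).2⟩
      rw [hFv, Finset.mem_sdiff]
      push_neg
      intro _
      exact hrA
  have hGr1 : G.roots.card = 1 := by rw [hGroots]; rfl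
  -- parents of non-MD Y vertices
  have hSA : ∀ v ∈ S, v ∉ Y.mdSet → ∃ w s, Y.par v = some (w, s) ∧ w ∈ Y.mdSet := by
    intro v hvS hvA
    have hvY : v ∈ Y.verts := hYv ▸ hvS
    rcases hp : Y.par v with _ | ⟨w, s⟩
    · have : v ∈ Y.roots := mem_roots.2 ⟨hvY, hp⟩
      rw [hr, Finset.mem_singleton] at this
      exact absurd (this ▸ hrA) hvA
    · have hwY : w ∈ Y.verts := Y.par_mem v hvY w s hp
      refine ⟨w, s, rfl, ?_⟩
      by_contra hwA
      have : Y.IsLeaf w := hleaf w hwY (fun h => hwA (mem_mdSet.2 h))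
      exact this v s hp
  -- yset of G
  have hGyset : G.yset = S := by
    ext v
    rw [mem_yset]
    constructor
    · rintro ⟨hv, hcond⟩
      rw [hG, glue_verts, Finset.mem_union] at hv
      by_cases hvY : v ∈ Y.verts
      · exact hYv ▸ hvY
      · have hvF : v ∈ F.verts := by tauto
        exfalso
        rcases hcond with h | ⟨w, s, hps, hmd⟩
        · exact hnotY v hvF hvY h
        · rw [hG, glue_par] at hps
          rcases gluePar_cases hps with h' | ⟨_, h'⟩
          · have hwF : w ∈ F.verts := F.par_mem v hvF w s h'
            by_cases hwY : w ∈ Y.verts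
            · have hwA : w ∉ Y.mdSet := by
                rw [hFv, Finset.mem_sdiff] at hwF
                exact hwF.2
              exact hwA (mem_mdSet.2 ((hGin w hwY).1 hmd))
            · exact hnotY w hwF hwY hmd
          · exact hvY (mem_of_par_some h')
    · intro hvS
      have hvY : v ∈ Y.verts := hYv ▸ hvS
      refine ⟨by rw [hG, glue_verts]; exact Finset.mem_union_left _ hvY, ?_⟩
      by_cases hvA : v ∈ Y.mdSet
      · exact Or.inl ((hGin v hvY).2 (mem_mdSet.1 hvA))
      · obtain ⟨w, s, hp, hwA⟩ := hSA v hvS hvA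
        have hwY : w ∈ Y.verts := mdSet_subset hwA
        refine Or.inr ⟨w, s, ?_, (hGin w hwY).2 (mem_mdSet.1 hwA)⟩
        rw [hGpar_Y v hvY]
        exact hp
  -- restriction back to Y
  have hYrec : G.restrict S = Y := by
    refine ext' ?_ ?_
    · rw [restrict_verts, hGv, hYv]
      exact Finset.inter_eq_right.2 hSW
    · funext v
      rw [restrict_par]
      by_cases hvS : v ∈ S
      · have hvY : v ∈ Y.verts := hYv ▸ hvS
        rcases hp : Y.par v with _ | ⟨w, s⟩
        · exact restrictPar_eq_none_of_par_none (by rw [hGpar_Y v hvY]; exact hp)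
        · have hwS : w ∈ S := hYv ▸ Y.par_mem v hvY w s hp
          exact restrictPar_of_mem hvS hwS (by rw [hGpar_Y v hvY]; exact hp)
      · rw [restrictPar_eq_none_of_not_mem hvS,
          Y.par_eq_none_of_not_mem v (fun h => hvS (hYv ▸ h))]
  -- restriction back to F
  have hFrec : G.restrict (W \ Y.mdSet) = F := by
    refine ext' ?_ ?_
    · rw [restrict_verts, hGv, hFv]
      exact Finset.inter_eq_right.2 (Finset.sdiff_subset)
    · funext v
      rw [restrict_par]
      by_cases hvF : v ∈ W \ Y.mdSet
      · by_cases hvS : v ∈ S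
        · have hvA : v ∉ Y.mdSet := (Finset.mem_sdiff.1 hvF).2
          obtain ⟨w, s, hp, hwA⟩ := hSA v hvS hvA
          have hGp : G.par v = some (w, s) := by
            rw [hGpar_Y v (hYv ▸ hvS)]
            exact hp
          rw [restrictPar_eq_none_of_cut hGp
            (fun hmem => (Finset.mem_sdiff.1 hmem).2 hwA)]
          have : v ∈ F.roots := by
            rw [hFr, Finset.mem_sdiff]
            exact ⟨hvS, hvA⟩
          exact ((mem_roots.1 this).2).symm
        · have hvY : v ∉ Y.verts := fun h => hvS (hYv ▸ h)
          have hvF' : v ∈ F.verts := hFv ▸ hvF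
          rcases hp : F.par v with _ | ⟨w, s⟩
          · have : v ∈ F.roots := mem_roots.2 ⟨hvF', hp⟩
            rw [hFr, Finset.mem_sdiff] at this
            exact absurd this.1 hvS
          · have hwF : w ∈ F.verts := F.par_mem v hvF' w s hp
            exact restrictPar_of_mem hvF (hFv ▸ hwF)
              (by rw [hG, glue_par]; exact gluePar_of_some hp)
      · rw [restrictPar_eq_none_of_not_mem hvF,
          F.par_eq_none_of_not_mem v (fun h => hvF (hFv ▸ h))]
  exact ⟨hGv, hGr1, hGmd, hGyset, hYrec, hFrec⟩

end PForest
end MainGlue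
section MainAssembly
namespace PForest

variable {p : ℕ}

theorem glue_h1 {S W : Finset ℕ} {Y F : PForest p} (hYv : Y.verts = S)
    (hFv : F.verts = W \ Y.mdSet) (hFr : F.roots = S \ Y.mdSet) :
    ∀ v ∈ Y.verts, v ∈ F.verts → F.par v = none := by
  intro v hv hvF
  have : v ∈ F.roots := by
    rw [hFr, Finset.mem_sdiff]
    exact ⟨hYv ▸ hv, (Finset.mem_sdiff.1 (hFv ▸ hvF)).2⟩
  exact (mem_roots.1 this).2

theorem glue_h2 {S W : Finset ℕ} {Y F : PForest p} (hYv : Y.verts = S)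
    (hleaf : ∀ v ∈ Y.verts, ¬Y.InMD v → Y.IsLeaf v)
    (hFv : F.verts = W \ Y.mdSet) :
    ∀ v ∈ Y.verts, v ∈ F.verts → Y.IsLeaf v := by
  intro v hv hvF
  exact hleaf v hv (fun h => (Finset.mem_sdiff.1 (hFv ▸ hvF)).2 (mem_mdSet.2 h))

end PForest
end MainAssembly

open PForest in
/-- The type of pairs (label set `S`, tree `Y` on `S`). -/
def SYt (p k m : ℕ) (W : Finset ℕ) : Type :=
  {q : Finset ℕ × PForest p // q.1 ∈ W.powersetCard m ∧ q.2.verts = q.1 ∧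
    q.2.roots.card = 1 ∧ q.2.mdSet.card = k ∧
    ∀ v ∈ q.2.verts, ¬q.2.InMD v → q.2.IsLeaf v}

open PForest in
/-- The type of triples (S, Y, F). -/
def DDt (p k m : ℕ) (W : Finset ℕ) : Type :=
  {q : (Finset ℕ × PForest p) × PForest p //
    (q.1.1 ∈ W.powersetCard m ∧ q.1.2.verts = q.1.1 ∧ q.1.2.roots.card = 1 ∧
      q.1.2.mdSet.card = k ∧ ∀ v ∈ q.1.2.verts, ¬q.1.2.InMD v → q.1.2.IsLeaf v) ∧
    q.2.verts = W \ q.1.2.mdSet ∧ q.2.roots = q.1.1 \ q.1.2.mdSet}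

open PForest in
/-- The fiber of forests attached to a fixed (S, Y). -/
def FIBt (p : ℕ) (W : Finset ℕ) (sy : Finset ℕ × PForest p) : Type :=
  {F : PForest p // F.verts = W \ sy.2.mdSet ∧ F.roots = sy.1 \ sy.2.mdSet}

def ddSigma (p k m : ℕ) (W : Finset ℕ) :
    DDt p k m W ≃ Σ sy : SYt p k m W, FIBt p W sy.1 where
  toFun q := ⟨⟨q.1.1, q.2.1⟩, ⟨q.1.2, q.2.2⟩⟩
  invFun s := ⟨(s.1.1, s.2.1), s.1.2, s.2.2⟩
  left_inv q := rfl
  right_inv s := rfl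
open PForest in
theorem stmt13' (p n k m : ℕ) (hp : 2 ≤ p) (hk : 1 ≤ k) (hkm : k ≤ m) (hmn : m ≤ n) :
    (Nat.card {T : PForest p // T.IsTreeOn n ∧ T.mdSet.card = k ∧
        (T.verts.filter
          (fun v => T.InMD v ∨ ∃ w s, T.par v = some (w, s) ∧ T.InMD w)).card = m} : ℚ)
      = (n.choose m : ℚ) * (y p m k : ℚ) *
          ((f p (n - k) (m - k) : ℚ) / (((n - k).choose (m - k) : ℕ) : ℚ)) := by
  classical
  have hn : 1 ≤ n := le_trans hk (le_trans hkm hmn)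
  have hWcard : (Finset.Icc 1 n).card = n := by rw [Nat.card_Icc]; omega
  have hminn : min n 1 = 1 := by omega
  have hfilt : ∀ T : PForest p, T.verts.filter
      (fun v => T.InMD v ∨ ∃ w s, T.par v = some (w, s) ∧ T.InMD w) = T.yset :=
    fun T => rfl
  -- the main bijection
  have e1 : {T : PForest p // T.IsTreeOn n ∧ T.mdSet.card = k ∧
      (T.verts.filter
        (fun v => T.InMD v ∨ ∃ w s, T.par v = some (w, s) ∧ T.InMD w)).card = m}
      ≃ DDt p k m (Finset.Icc 1 n) := by
    refine ⟨fun T => ⟨((T.1.yset, T.1.restrict T.1.yset),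
        T.1.restrict (Finset.Icc 1 n \ T.1.mdSet)), ?_⟩,
      fun q => ⟨glue q.1.1.2 q.1.2 (glue_h1 q.2.1.2.1 q.2.2.1 q.2.2.2)
        (glue_h2 q.2.1.2.1 q.2.1.2.2.2.2 q.2.2.1), ?_⟩, ?_, ?_⟩
    · obtain ⟨⟨hTv, hTr⟩, hTmd, hTy⟩ := T.2
      have hys : T.1.yset.card = m := by rw [← hfilt]; exact hTy
      have hroot1 : T.1.roots.card = 1 := by rw [hTr, hminn]
      refine ⟨⟨?_, ?_, ?_, ?_, ?_⟩, ?_, ?_⟩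
      · exact Finset.mem_powersetCard.2 ⟨(yset_subset T.1).trans (le_of_eq hTv), hys⟩
      · exact restrictY_verts T.1
      · rw [restrictY_roots T.1, hroot1]
      · rw [restrictY_mdSet T.1, hTmd]
      · exact restrictY_leaf T.1
      · rw [restrictY_mdSet T.1]
        exact restrictF_verts hTv
      · rw [restrictY_mdSet T.1]
        exact restrictF_roots hTv
    · have hAne : q.1.1.2.mdSet.Nonempty :=
        Finset.card_pos.1 (by rw [q.2.1.2.2.2.1]; omega)
      have hSW : q.1.1.1 ⊆ Finset.Icc 1 n := (Finset.mem_powersetCard.1 q.2.1.1).1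
      obtain ⟨hGv, hGr, hGmd, hGyset, _, _⟩ :=
        glue_side q.2.1.2.1 q.2.1.2.2.1 q.2.1.2.2.2.2 hAne hSW q.2.2.1 q.2.2.2
          (glue_h1 q.2.1.2.1 q.2.2.1 q.2.2.2) (glue_h2 q.2.1.2.1 q.2.1.2.2.2.2 q.2.2.1)
      refine ⟨⟨hGv, by rw [hGr]; omega⟩, by rw [hGmd]; exact q.2.1.2.2.2.1, ?_⟩
      rw [hfilt, hGyset]
      exact (Finset.mem_powersetCard.1 q.2.1.1).2
    · intro T
      have hFv' : (T.1.restrict (Finset.Icc 1 n \ T.1.mdSet)).verts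
          = Finset.Icc 1 n \ (T.1.restrict T.1.yset).mdSet := by
        rw [restrictY_mdSet]
        exact restrictF_verts T.2.1.1
      have hFr' : (T.1.restrict (Finset.Icc 1 n \ T.1.mdSet)).roots
          = T.1.yset \ (T.1.restrict T.1.yset).mdSet := by
        rw [restrictY_mdSet]
        exact restrictF_roots T.2.1.1
      have hYv' : (T.1.restrict T.1.yset).verts = T.1.yset := restrictY_verts T.1
      exact Subtype.ext (glue_restrict T.2.1.1
        (glue_h1 hYv' hFv' hFr') (glue_h2 hYv' (restrictY_leaf T.1) hFv'))
    · intro q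
      have hAne : q.1.1.2.mdSet.Nonempty :=
        Finset.card_pos.1 (by rw [q.2.1.2.2.2.1]; omega)
      have hSW : q.1.1.1 ⊆ Finset.Icc 1 n := (Finset.mem_powersetCard.1 q.2.1.1).1
      obtain ⟨hGv, hGr, hGmd, hGyset, hYrec, hFrec⟩ :=
        glue_side q.2.1.2.1 q.2.1.2.2.1 q.2.1.2.2.2.2 hAne hSW q.2.2.1 q.2.2.2
          (glue_h1 q.2.1.2.1 q.2.2.1 q.2.2.2) (glue_h2 q.2.1.2.1 q.2.1.2.2.2.2 q.2.2.1)
      have e : (((glue q.1.1.2 q.1.2 (glue_h1 q.2.1.2.1 q.2.2.1 q.2.2.2)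
            (glue_h2 q.2.1.2.1 q.2.1.2.2.2.2 q.2.2.1)).yset,
          (glue q.1.1.2 q.1.2 (glue_h1 q.2.1.2.1 q.2.2.1 q.2.2.2)
            (glue_h2 q.2.1.2.1 q.2.1.2.2.2.2 q.2.2.1)).restrict
          (glue q.1.1.2 q.1.2 (glue_h1 q.2.1.2.1 q.2.2.1 q.2.2.2)
            (glue_h2 q.2.1.2.1 q.2.1.2.2.2.2 q.2.2.1)).yset),
          (glue q.1.1.2 q.1.2 (glue_h1 q.2.1.2.1 q.2.2.1 q.2.2.2)
            (glue_h2 q.2.1.2.1 q.2.1.2.2.2.2 q.2.2.1)).restrict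
          (Finset.Icc 1 n \ (glue q.1.1.2 q.1.2 (glue_h1 q.2.1.2.1 q.2.2.1 q.2.2.2)
            (glue_h2 q.2.1.2.1 q.2.1.2.2.2.2 q.2.2.1)).mdSet)) = q.1 := by
        rw [hGyset, hGmd, hYrec, hFrec]
      exact Subtype.ext e
  -- finiteness
  have hSYfin : Finite (SYt p k m (Finset.Icc 1 n)) := by
    have := finite_subforests (p := p) (Finset.Icc 1 n)
    refine Finite.of_injective (fun q : SYt p k m (Finset.Icc 1 n) =>
      ((⟨q.1.1, Finset.mem_powerset.2 (Finset.mem_powersetCard.1 q.2.1).1⟩ :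
          {A // A ∈ (Finset.Icc 1 n).powerset}),
       (⟨q.1.2, by rw [q.2.2.1]; exact (Finset.mem_powersetCard.1 q.2.1).1⟩ :
          {T : PForest p // T.verts ⊆ Finset.Icc 1 n}))) ?_
    intro a b h
    simp only [Prod.mk.injEq, Subtype.mk.injEq] at h
    exact Subtype.ext (Prod.ext h.1 h.2)
  letI : Fintype (SYt p k m (Finset.Icc 1 n)) := Fintype.ofFinite _
  have hFIBfin : ∀ sy, Finite (FIBt p (Finset.Icc 1 n) sy) := by
    intro sy
    unfold FIBt
    exact finite_cond (Finset.Icc 1 n \ sy.2.mdSet) _ (fun T hT => by rw [hT.1])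
  letI : ∀ sy : SYt p k m (Finset.Icc 1 n), Finite (FIBt p (Finset.Icc 1 n) sy.1) :=
    fun sy => hFIBfin sy.1
  -- fiber counts
  have hfib : ∀ sy : SYt p k m (Finset.Icc 1 n),
      Nat.card (FIBt p (Finset.Icc 1 n) sy.1) * ((n - k).choose (m - k))
        = f p (n - k) (m - k) := by
    intro sy
    obtain ⟨hmem, hYv, hYr, hYmd, hleaf⟩ := sy.2
    have hSW : sy.1.1 ⊆ Finset.Icc 1 n := (Finset.mem_powersetCard.1 hmem).1
    have hScard : sy.1.1.card = m := (Finset.mem_powersetCard.1 hmem).2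
    have hAS : sy.1.2.mdSet ⊆ sy.1.1 := hYv ▸ mdSet_subset (T := sy.1.2)
    have hsub : sy.1.1 \ sy.1.2.mdSet ⊆ Finset.Icc 1 n \ sy.1.2.mdSet :=
      Finset.sdiff_subset_sdiff hSW (le_refl _)
    have h1 : (Finset.Icc 1 n \ sy.1.2.mdSet).card = n - k := by
      rw [Finset.card_sdiff_of_subset (hAS.trans hSW), hWcard, hYmd]
    have h2 : (sy.1.1 \ sy.1.2.mdSet).card = m - k := by
      rw [Finset.card_sdiff_of_subset hAS, hScard, hYmd]
    have := card_FR_mul (p := p) (Finset.Icc 1 n \ sy.1.2.mdSet)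
      (sy.1.1 \ sy.1.2.mdSet) hsub
    rw [h1, h2] at this
    exact this
  -- count of (S, Y) pairs
  have e3 : SYt p k m (Finset.Icc 1 n) ≃
      Σ S : {S // S ∈ (Finset.Icc 1 n).powersetCard m},
      {Y : PForest p // Y.verts = S.1 ∧ Y.roots.card = 1 ∧ Y.mdSet.card = k ∧
        ∀ v ∈ Y.verts, ¬Y.InMD v → Y.IsLeaf v} :=
    ⟨fun q => ⟨⟨q.1.1, q.2.1⟩, ⟨q.1.2, q.2.2⟩⟩,
     fun s => ⟨(s.1.1, s.2.1), s.1.2, s.2.2⟩, fun q => rfl, fun s => rfl⟩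
  have hYfin : ∀ S : {S // S ∈ (Finset.Icc 1 n).powersetCard m},
      Finite {Y : PForest p // Y.verts = S.1 ∧ Y.roots.card = 1 ∧ Y.mdSet.card = k ∧
        ∀ v ∈ Y.verts, ¬Y.InMD v → Y.IsLeaf v} := by
    intro S
    exact finite_cond (Finset.Icc 1 n) _
      (fun T hT => by rw [hT.1]; exact (Finset.mem_powersetCard.1 S.2).1)
  letI := hYfin
  have cardSY : Nat.card (SYt p k m (Finset.Icc 1 n)) = n.choose m * y p m k := by
    rw [Nat.card_congr e3, nat_card_sigma]
    rw [Finset.sum_congr rfl (fun S _ =>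
      card_Ylike S.1 m k (Finset.mem_powersetCard.1 S.2).2 (by omega))]
    rw [Finset.sum_const, smul_eq_mul, Finset.card_univ, Fintype.card_coe,
      Finset.card_powersetCard, hWcard]
  -- assembling
  have cardX_eq : Nat.card {T : PForest p // T.IsTreeOn n ∧ T.mdSet.card = k ∧
      (T.verts.filter
        (fun v => T.InMD v ∨ ∃ w s, T.par v = some (w, s) ∧ T.InMD w)).card = m}
      = ∑ sy : SYt p k m (Finset.Icc 1 n), Nat.card (FIBt p (Finset.Icc 1 n) sy.1) := by
    rw [Nat.card_congr e1, Nat.card_congr (ddSigma p k m (Finset.Icc 1 n)), nat_card_sigma]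
  have key : Nat.card {T : PForest p // T.IsTreeOn n ∧ T.mdSet.card = k ∧
      (T.verts.filter
        (fun v => T.InMD v ∨ ∃ w s, T.par v = some (w, s) ∧ T.InMD w)).card = m}
      * ((n - k).choose (m - k)) = (n.choose m * y p m k) * f p (n - k) (m - k) := by
    rw [cardX_eq, Finset.sum_mul, Finset.sum_congr rfl (fun sy _ => hfib sy),
      Finset.sum_const, smul_eq_mul, Finset.card_univ, ← Nat.card_eq_fintype_card, cardSY]
  have hCpos : 0 < (n - k).choose (m - k) := Nat.choose_pos (by omega)
  have hq : (((n - k).choose (m - k) : ℕ) : ℚ) ≠ 0 := Nat.cast_ne_zero.2 hCpos.ne'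
  have hgoal : (Nat.card {T : PForest p // T.IsTreeOn n ∧ T.mdSet.card = k ∧
      (T.verts.filter
        (fun v => T.InMD v ∨ ∃ w s, T.par v = some (w, s) ∧ T.InMD w)).card = m} : ℚ)
      = ((n.choose m : ℚ) * (y p m k : ℚ) * (f p (n - k) (m - k) : ℚ))
        / (((n - k).choose (m - k) : ℕ) : ℚ) := by
    rw [eq_div_iff hq]
    exact_mod_cast key
  rw [hgoal]
  ring

/-- The number of `p`-ary labeled trees `T` on `[n]` with `|MD(T)| = k` such
that the subtree `Y` consisting of `MD(T)` together with all its increasing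
leaves has exactly `m` vertices equals
`binom(n,m) · y(m,k) · f(n-k, m-k) / binom(n-k, m-k)`. -/
theorem stmt13 (p n k m : ℕ) (hp : 2 ≤ p) (hk : 1 ≤ k) (hkm : k ≤ m) (hmn : m ≤ n) :
    (Nat.card {T : PForest p // T.IsTreeOn n ∧ T.mdSet.card = k ∧
        (T.verts.filter
          (fun v => T.InMD v ∨ ∃ w s, T.par v = some (w, s) ∧ T.InMD w)).card = m} : ℚ)
      = (n.choose m : ℚ) * (y p m k : ℚ) *
          ((f p (n - k) (m - k) : ℚ) / (((n - k).choose (m - k) : ℕ) : ℚ)) := by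
  exact stmt13' p n k m hp hk hkm hmn
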